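/- arXiv:0805.2654 — 3 statements merged into one kernel-verified Lean document; each statement's English description precedes it below -/
import Mathlib

section
/- Let 0 < α, p, q be real numbers with p + 1 < q(1+α), and let δ > 0. Then there exist constants c, C > 0 and h₀ > 0 such that for all 0 < h < h₀, c · h^((p+1)/(1+α) − q) ≤ ∫_{-δ}^{δ} |x|^p / (h + |x|^(1+α))^q dx ≤ C · h^((p+1)/(1+α) − q). -/
open MeasureTheory Set

theorem drainage_integral_case_i (α p q δ : ℝ) (hα : 0 < α) (hp : 0 < p) (hq : 0 < q)
    (hpq : p + 1 < q * (1 + α)) (hδ : 0 < δ) :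
    ∃ c C h₀ : ℝ, 0 < c ∧ 0 < C ∧ 0 < h₀ ∧
      ∀ h : ℝ, 0 < h → h < h₀ →
        c * h ^ ((p + 1) / (1 + α) - q) ≤
          (∫ x in Ioo (-δ) δ, |x| ^ p / (h + |x| ^ (1 + α)) ^ q) ∧
        (∫ x in Ioo (-δ) δ, |x| ^ p / (h + |x| ^ (1 + α)) ^ q) ≤
          C * h ^ ((p + 1) / (1 + α) - q) := by
  have hβ0 : (0:ℝ) < 1 + α := by linarith
  set β := 1 + α with hβdef
  have hqβ : p + 1 < β * q := by rw [mul_comm]; exact hpq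
  have hden : 0 < β * q - p - 1 := by linarith
  have hp1 : (0:ℝ) < p + 1 := by linarith
  have h2q : (0:ℝ) < (2:ℝ) ^ q := Real.rpow_pos_of_pos (by norm_num) q
  refine ⟨1/((p+1) * 2^q), 2*(1/(p+1) + 1/(β*q - p - 1)), δ ^ β,
    by positivity, ?_, Real.rpow_pos_of_pos hδ β, ?_⟩
  · have h1 : (0:ℝ) < 1/(p+1) := by positivity
    have h2 : (0:ℝ) < 1/(β*q - p - 1) := by positivity
    linarith
  intro h h0 hh
  set m := h ^ β⁻¹ with hmdef
  have hm0 : 0 < m := Real.rpow_pos_of_pos h0 _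
  have hmβ : m ^ β = h := by
    rw [hmdef, ← Real.rpow_mul h0.le, inv_mul_cancel₀ hβ0.ne', Real.rpow_one]
  have hmδ : m < δ := by
    have := Real.rpow_lt_rpow h0.le hh (inv_pos.mpr hβ0)
    rwa [← Real.rpow_mul hδ.le, mul_inv_cancel₀ hβ0.ne', Real.rpow_one] at this
  set F := fun x : ℝ => |x| ^ p / (h + |x| ^ β) ^ q with hFdef
  have hFpos : ∀ x : ℝ, 0 ≤ F x := by
    intro x
    have : (0:ℝ) < h + |x| ^ β := by positivity
    positivity
  have hFc : Continuous F := by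
    have h1 : Continuous fun x : ℝ => |x| ^ p :=
      continuous_abs.rpow_const fun x => Or.inr hp.le
    have h2 : Continuous fun x : ℝ => (h + |x| ^ β) ^ q :=
      (continuous_const.add (continuous_abs.rpow_const fun x => Or.inr hβ0.le)).rpow_const
        fun x => Or.inl (by show h + |x| ^ β ≠ 0; positivity)
    exact h1.div h2 fun x => by positivity
  have hFi : ∀ a b : ℝ, IntervalIntegrable F volume a b := fun a b =>
    hFc.intervalIntegrable a b
  -- convert the set integral to an interval integral
  have hconv : (∫ x in Ioo (-δ) δ, F x) = ∫ x in (-δ)..δ, F x := by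
    rw [intervalIntegral.integral_of_le (by linarith), integral_Ioc_eq_integral_Ioo]
  -- evenness
  have heven : (∫ x in (-δ)..(0:ℝ), F x) = ∫ x in (0:ℝ)..δ, F x := by
    have h1 : (∫ x in (-δ)..(0:ℝ), F (-x)) = ∫ x in (-(0:ℝ))..(-(-δ)), F x :=
      intervalIntegral.integral_comp_neg F
    simp only [neg_neg, neg_zero] at h1
    rw [← h1]
    congr 1
    ext x
    simp [hFdef, abs_neg]
  have hsplit : (∫ x in Ioo (-δ) δ, F x) = 2 * ∫ x in (0:ℝ)..δ, F x := by
    rw [hconv, ← intervalIntegral.integral_add_adjacent_intervals (hFi (-δ) 0) (hFi 0 δ),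
      heven]
    ring
  have hsplit2 : (∫ x in (0:ℝ)..δ, F x) =
      (∫ x in (0:ℝ)..m, F x) + ∫ x in m..δ, F x :=
    (intervalIntegral.integral_add_adjacent_intervals (hFi 0 m) (hFi m δ)).symm
  -- integrability of pure powers
  have hip : IntervalIntegrable (fun x : ℝ => x ^ p) volume 0 m :=
    intervalIntegral.intervalIntegrable_rpow (Or.inl hp.le)
  have his : IntervalIntegrable (fun x : ℝ => x ^ (p - β * q)) volume m δ := by
    apply intervalIntegral.intervalIntegrable_rpow
    right
    rw [Set.uIcc_of_le hmδ.le]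
    intro hmem
    exact absurd hmem.1 (by linarith)
  have hintp : (∫ x in (0:ℝ)..m, x ^ p) = m ^ (p + 1) / (p + 1) := by
    rw [integral_rpow (Or.inl (by linarith))]
    rw [Real.zero_rpow (by positivity)]
    ring
  -- the power of h appearing everywhere
  have hmpow : m ^ (p + 1) = h ^ ((p + 1) / β) := by
    rw [hmdef, ← Real.rpow_mul h0.le]
    congr 1
    field_simp
  have hE : h ^ ((p + 1) / β) / h ^ q = h ^ ((p + 1) / β - q) := by
    rw [Real.rpow_sub h0, div_eq_div_iff (by positivity) (by positivity)]
  constructor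
  · -- lower bound
    have hlow1 : (∫ x in (0:ℝ)..m, x ^ p / (2 * h) ^ q) ≤ ∫ x in (0:ℝ)..m, F x := by
      apply intervalIntegral.integral_mono_on hm0.le
        (hip.div_const _) (hFi 0 m)
      intro x hx
      have hx0 : 0 ≤ x := hx.1
      rw [hFdef]
      simp only
      rw [abs_of_nonneg hx0]
      have hxβ : x ^ β ≤ h := by
        calc x ^ β ≤ m ^ β := Real.rpow_le_rpow hx0 hx.2 hβ0.le
        _ = h := hmβ
      have hd : (h + x ^ β) ^ q ≤ (2 * h) ^ q :=
        Real.rpow_le_rpow (by positivity) (by linarith) hq.le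
      have hd0 : (0:ℝ) < (h + x ^ β) ^ q := by positivity
      exact div_le_div_of_nonneg_left (by positivity) hd0 hd
    have hlow2 : (∫ x in (0:ℝ)..m, F x) ≤ ∫ x in Ioo (-δ) δ, F x := by
      rw [hsplit, hsplit2]
      have h1 : 0 ≤ ∫ x in m..δ, F x :=
        intervalIntegral.integral_nonneg hmδ.le fun x _ => hFpos x
      have h2 : 0 ≤ ∫ x in (0:ℝ)..m, F x :=
        intervalIntegral.integral_nonneg hm0.le fun x _ => hFpos x
      linarith
    have hval : (∫ x in (0:ℝ)..m, x ^ p / (2 * h) ^ q)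
        = 1/((p+1) * 2^q) * h ^ ((p + 1) / β - q) := by
      rw [intervalIntegral.integral_div, hintp, hmpow,
        Real.mul_rpow (by norm_num) h0.le, ← hE]
      field_simp [h0.ne', (Real.rpow_pos_of_pos h0 q).ne']
    calc 1/((p+1) * 2^q) * h ^ ((p + 1) / β - q)
        = ∫ x in (0:ℝ)..m, x ^ p / (2 * h) ^ q := hval.symm
      _ ≤ ∫ x in (0:ℝ)..m, F x := hlow1
      _ ≤ ∫ x in Ioo (-δ) δ, F x := hlow2
  · -- upper bound
    have hup1 : (∫ x in (0:ℝ)..m, F x) ≤ ∫ x in (0:ℝ)..m, x ^ p / h ^ q := by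
      apply intervalIntegral.integral_mono_on hm0.le (hFi 0 m) (hip.div_const _)
      intro x hx
      have hx0 : 0 ≤ x := hx.1
      rw [hFdef]
      simp only
      rw [abs_of_nonneg hx0]
      have hd : h ^ q ≤ (h + x ^ β) ^ q :=
        Real.rpow_le_rpow h0.le (le_add_of_nonneg_right (Real.rpow_nonneg hx0 β)) hq.le
      exact div_le_div_of_nonneg_left (Real.rpow_nonneg hx0 p) (Real.rpow_pos_of_pos h0 q) hd
    have hup2 : (∫ x in m..δ, F x) ≤ ∫ x in m..δ, x ^ (p - β * q) := by
      apply intervalIntegral.integral_mono_on hmδ.le (hFi m δ) his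
      intro x hx
      have hx0 : 0 < x := lt_of_lt_of_le hm0 hx.1
      rw [hFdef]
      simp only
      rw [abs_of_pos hx0]
      have hd : x ^ (β * q) ≤ (h + x ^ β) ^ q := by
        rw [Real.rpow_mul hx0.le]
        exact Real.rpow_le_rpow (by positivity) (by linarith [Real.rpow_pos_of_pos hx0 β]) hq.le
      calc x ^ p / (h + x ^ β) ^ q ≤ x ^ p / x ^ (β * q) :=
            div_le_div_of_nonneg_left (Real.rpow_nonneg hx0.le p) (Real.rpow_pos_of_pos hx0 _) hd
        _ = x ^ (p - β * q) := by rw [← Real.rpow_sub hx0]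
    have hval1 : (∫ x in (0:ℝ)..m, x ^ p / h ^ q)
        = 1/(p+1) * h ^ ((p + 1) / β - q) := by
      rw [intervalIntegral.integral_div, hintp, hmpow, ← hE]
      field_simp
    have hval2 : (∫ x in m..δ, x ^ (p - β * q)) ≤
        1/(β*q - p - 1) * h ^ ((p + 1) / β - q) := by
      rw [integral_rpow (Or.inr ⟨by intro hc; linarith,
        by rw [Set.uIcc_of_le hmδ.le]; intro hmem; exact absurd hmem.1 (by linarith)⟩)]
      have hms : m ^ (p - β * q + 1) = h ^ ((p + 1) / β - q) := by
        rw [hmdef, ← Real.rpow_mul h0.le]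
        congr 1
        field_simp
        ring
      have hδs : 0 < δ ^ (p - β * q + 1) := Real.rpow_pos_of_pos hδ _
      rw [div_le_iff_of_neg (by linarith : p - β * q + 1 < 0)]
      rw [← hms]
      have : 1/(β*q - p - 1) * m ^ (p - β * q + 1) * (p - β * q + 1)
          = - m ^ (p - β * q + 1) := by
        field_simp
        ring
      rw [this]
      linarith
    rw [hsplit, hsplit2]
    calc 2 * ((∫ x in (0:ℝ)..m, F x) + ∫ x in m..δ, F x)
        ≤ 2 * ((1/(p+1) * h ^ ((p + 1) / β - q)) +
            (1/(β*q - p - 1) * h ^ ((p + 1) / β - q))) := by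
          have := hup1
          have := hup2
          rw [← hval1]
          linarith
      _ = 2*(1/(p+1) + 1/(β*q - p - 1)) * h ^ ((p + 1) / β - q) := by ring
end

section
/- Let 0 < α, p, q be real numbers with p + 1 = q(1+α), and let δ > 0. Then there exist constants c, C > 0 and h₀ ∈ (0,1) such that for all 0 < h < h₀, c · |log h| ≤ ∫_{-δ}^{δ} |x|^p / (h + |x|^(1+α))^q dx ≤ C · |log h|. -/
open MeasureTheory Set

theorem drainage_integral_case_ii (α p q δ : ℝ) (hα : 0 < α) (hp : 0 < p) (hq : 0 < q)
    (hpq : p + 1 = q * (1 + α)) (hδ : 0 < δ) :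
    ∃ c C h₀ : ℝ, 0 < c ∧ 0 < C ∧ 0 < h₀ ∧ h₀ < 1 ∧
      ∀ h : ℝ, 0 < h → h < h₀ →
        c * |Real.log h| ≤ (∫ x in Ioo (-δ) δ, |x| ^ p / (h + |x| ^ (1 + α)) ^ q) ∧
        (∫ x in Ioo (-δ) δ, |x| ^ p / (h + |x| ^ (1 + α)) ^ q) ≤ C * |Real.log h| := by
  set β : ℝ := 1 + α with hβdef
  have hβ : 0 < β := by positivity
  have hpβq : p - β * q = -1 := by rw [mul_comm]; linarith [hpq]
  have hM1 : (1:ℝ) ≤ 1 + 2 * β * |Real.log δ| := by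
    nlinarith [abs_nonneg (Real.log δ), hβ.le]
  set M : ℝ := 1 + 2 * β * |Real.log δ| with hMdef
  refine ⟨(2:ℝ) ^ (-q) / (2 * β), 2 * (1/(p+1) + |Real.log δ| + 1/β),
    min (δ ^ β) (Real.exp (-M)), by positivity, by positivity, ?_, ?_, ?_⟩
  · exact lt_min (Real.rpow_pos_of_pos hδ β) (Real.exp_pos _)
  · exact lt_of_le_of_lt (min_le_right _ _)
      (Real.exp_lt_one_iff.mpr (by linarith))
  intro h h0 hh
  have hhδβ : h < δ ^ β := lt_of_lt_of_le hh (min_le_left _ _)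
  have hhe : h < Real.exp (-M) := lt_of_lt_of_le hh (min_le_right _ _)
  have hlogh : Real.log h < -M := (Real.log_lt_iff_lt_exp h0).mpr hhe
  set L : ℝ := |Real.log h| with hLdef
  have hLeq : L = -Real.log h := abs_of_neg (by linarith)
  have hLM : M < L := by rw [hLeq]; linarith
  have hL1 : 1 ≤ L := by linarith
  have hLδ : 2 * β * |Real.log δ| ≤ L := by linarith
  -- the point a = h^(1/β)
  set a : ℝ := h ^ (1/β) with hadef
  have ha0 : 0 < a := Real.rpow_pos_of_pos h0 _
  have haβ : a ^ β = h := by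
    rw [hadef, ← Real.rpow_mul h0.le, one_div, inv_mul_cancel₀ hβ.ne', Real.rpow_one]
  have haδ : a < δ := by
    by_contra hcon
    push_neg at hcon
    have := Real.rpow_le_rpow hδ.le hcon hβ.le
    rw [haβ] at this
    linarith
  have hloga : Real.log a = Real.log h / β := by
    rw [hadef, Real.log_rpow h0]; ring
  -- the integrand
  set f : ℝ → ℝ := fun x => |x| ^ p / (h + |x| ^ β) ^ q with hfdef
  have hden : ∀ x : ℝ, 0 < h + |x| ^ β := fun x => by positivity
  have hfc : Continuous f := by
    apply Continuous.div
    · exact continuous_abs.rpow_const (fun x => Or.inr hp.le)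
    · exact (continuous_const.add (continuous_abs.rpow_const
        (fun x => Or.inr hβ.le))).rpow_const (fun x => Or.inl (hden x).ne')
    · exact fun x => (Real.rpow_pos_of_pos (hden x) q).ne'
  have hfnn : ∀ x, 0 ≤ f x := fun x =>
    div_nonneg (Real.rpow_nonneg (abs_nonneg x) p)
      (Real.rpow_nonneg (hden x).le q)
  have hfint : ∀ u v : ℝ, IntervalIntegrable f volume u v := fun u v =>
    hfc.intervalIntegrable u v
  -- pointwise bounds on [a, δ]
  have hup : ∀ x ∈ Icc a δ, f x ≤ x⁻¹ := by
    intro x hx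
    have hx0 : 0 < x := lt_of_lt_of_le ha0 hx.1
    have habs : |x| = x := abs_of_pos hx0
    calc f x = x ^ p / (h + x ^ β) ^ q := by simp only [hfdef, habs]
      _ ≤ x ^ p / (x ^ β) ^ q := by
          apply div_le_div_of_nonneg_left (by positivity) (by positivity)
          exact Real.rpow_le_rpow (by positivity) (by linarith) hq.le
      _ = x⁻¹ := by
          rw [← Real.rpow_mul hx0.le, ← Real.rpow_sub hx0, hpβq, Real.rpow_neg_one]
  have hlow : ∀ x ∈ Icc a δ, (2:ℝ) ^ (-q) * x⁻¹ ≤ f x := by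
    intro x hx
    have hx0 : 0 < x := lt_of_lt_of_le ha0 hx.1
    have habs : |x| = x := abs_of_pos hx0
    have hhx : h ≤ x ^ β := by
      rw [← haβ]; exact Real.rpow_le_rpow ha0.le hx.1 hβ.le
    have key : (h + x ^ β) ^ q ≤ (2:ℝ) ^ q * (x ^ β) ^ q := by
      rw [← Real.mul_rpow (by norm_num) (by positivity)]
      exact Real.rpow_le_rpow (by positivity) (by linarith) hq.le
    have h2q : ((2:ℝ) ^ (-q)) = ((2:ℝ) ^ q)⁻¹ := by
      rw [Real.rpow_neg (by norm_num)]
    calc (2:ℝ) ^ (-q) * x⁻¹ = x ^ p / ((2:ℝ) ^ q * (x ^ β) ^ q) := by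
          rw [h2q, ← Real.rpow_mul hx0.le]
          rw [eq_div_iff (by positivity)]
          have : x ^ p = x ^ (β * q) * x⁻¹ := by
            rw [← Real.rpow_neg_one x, ← Real.rpow_add hx0]
            congr 1; linarith
          rw [this]
          have h2 : ((2:ℝ) ^ q) ≠ 0 := by positivity
          field_simp
      _ ≤ x ^ p / (h + x ^ β) ^ q := by
          apply div_le_div_of_nonneg_left (by positivity) (by positivity) key
      _ = f x := by simp only [hfdef, habs]
  -- pointwise bound on [0, a]
  have hup0 : ∀ x ∈ Icc (0:ℝ) a, f x ≤ x ^ p / h ^ q := by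
    intro x hx
    have habs : |x| = x := abs_of_nonneg hx.1
    calc f x = x ^ p / (h + x ^ β) ^ q := by simp only [hfdef, habs]
      _ ≤ x ^ p / h ^ q := by
          exact div_le_div_of_nonneg_left (Real.rpow_nonneg hx.1 p)
            (Real.rpow_pos_of_pos h0 q)
            (Real.rpow_le_rpow h0.le (le_add_of_nonneg_right (Real.rpow_nonneg hx.1 β)) hq.le)
  -- integrability of comparison functions
  have hainv : IntervalIntegrable (fun x : ℝ => x⁻¹) volume a δ := by
    apply intervalIntegral.intervalIntegrable_inv
    · intro x hx
      have : a ≤ x := by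
        rcases hx with ⟨h1, h2⟩
        simpa [min_eq_left haδ.le] using h1
      exact (lt_of_lt_of_le ha0 this).ne'
    · exact continuousOn_id
  have hcinv : IntervalIntegrable (fun x : ℝ => (2:ℝ) ^ (-q) * x⁻¹) volume a δ :=
    hainv.const_mul _
  -- interval integral over [a, δ] of x⁻¹
  have hinvval : (∫ x in a..δ, x⁻¹) = Real.log δ + L / β := by
    rw [integral_inv_of_pos ha0 hδ, Real.log_div hδ.ne' ha0.ne', hloga, hLeq]
    ring
  -- lower bound for ∫ a..δ f
  have hlow1 : (2:ℝ) ^ (-q) * (Real.log δ + L / β) ≤ ∫ x in a..δ, f x := by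
    calc (2:ℝ) ^ (-q) * (Real.log δ + L / β)
        = ∫ x in a..δ, (2:ℝ) ^ (-q) * x⁻¹ := by
          rw [intervalIntegral.integral_const_mul, hinvval]
      _ ≤ ∫ x in a..δ, f x :=
          intervalIntegral.integral_mono_on haδ.le hcinv (hfint a δ) hlow
  -- upper bound for ∫ a..δ f
  have hup1 : (∫ x in a..δ, f x) ≤ Real.log δ + L / β := by
    rw [← hinvval]
    exact intervalIntegral.integral_mono_on haδ.le (hfint a δ) hainv hup
  -- upper bound for ∫ 0..a f
  have haq : a ^ (p+1) = h ^ q := by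
    rw [hadef, ← Real.rpow_mul h0.le]
    congr 1
    field_simp
    linarith [hpq, mul_comm q β]
  have hup0' : (∫ x in (0:ℝ)..a, f x) ≤ 1 / (p+1) := by
    have hgint : IntervalIntegrable (fun x : ℝ => x ^ p / h ^ q) volume 0 a := by
      apply IntervalIntegrable.div_const
      exact intervalIntegral.intervalIntegrable_rpow' (by linarith)
    have hval : (∫ x in (0:ℝ)..a, x ^ p / h ^ q) = 1 / (p+1) := by
      simp only [div_eq_mul_inv]
      rw [intervalIntegral.integral_mul_const,
        integral_rpow (Or.inl (by linarith)), Real.zero_rpow (by positivity), haq]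
      field_simp
      ring
    rw [← hval]
    exact intervalIntegral.integral_mono_on ha0.le (hfint 0 a) hgint hup0
  -- symmetry: integral over Ioo (-δ) δ equals 2 * ∫ 0..δ
  have hsymm : (∫ x in Ioo (-δ) δ, f x) = 2 * ∫ x in (0:ℝ)..δ, f x := by
    rw [← integral_Ioc_eq_integral_Ioo,
      ← intervalIntegral.integral_of_le (by linarith : -δ ≤ δ),
      ← intervalIntegral.integral_add_adjacent_intervals (hfint (-δ) 0) (hfint 0 δ)]
    have h1 := intervalIntegral.integral_comp_neg (f := f) (a := 0) (b := δ)
    simp only [hfdef, abs_neg, neg_zero] at h1 ⊢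
    rw [← h1]
    ring
  have hsplit : (∫ x in (0:ℝ)..δ, f x) = (∫ x in (0:ℝ)..a, f x) + ∫ x in a..δ, f x :=
    (intervalIntegral.integral_add_adjacent_intervals (hfint 0 a) (hfint a δ)).symm
  -- lower bound for ∫ Ioo a δ as subset of Ioo (-δ) δ
  have hmono : (∫ x in a..δ, f x) ≤ ∫ x in Ioo (-δ) δ, f x := by
    rw [intervalIntegral.integral_of_le haδ.le, integral_Ioc_eq_integral_Ioo]
    apply setIntegral_mono_set
    · exact (hfc.integrableOn_Icc).mono_set Ioo_subset_Icc_self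
    · exact Filter.Eventually.of_forall hfnn
    · exact (Ioo_subset_Ioo (by linarith) le_rfl).eventuallyLE
  constructor
  · -- lower bound
    have hlogδL : |Real.log δ| ≤ L / (2 * β) := by
      rw [le_div_iff₀ (by positivity)]
      linarith [hLδ]
    have hkey : L / (2 * β) ≤ Real.log δ + L / β := by
      have h1 : -|Real.log δ| ≤ Real.log δ := neg_abs_le _
      have h2 : L / β = L / (2*β) + L / (2*β) := by field_simp; ring
      linarith
    calc (2:ℝ) ^ (-q) / (2 * β) * L = (2:ℝ) ^ (-q) * (L / (2 * β)) := by ring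
      _ ≤ (2:ℝ) ^ (-q) * (Real.log δ + L / β) := by
          apply mul_le_mul_of_nonneg_left hkey (by positivity)
      _ ≤ ∫ x in a..δ, f x := hlow1
      _ ≤ ∫ x in Ioo (-δ) δ, f x := hmono
  · -- upper bound
    have hlogδ : Real.log δ ≤ |Real.log δ| * L :=
      le_trans (le_abs_self _) (le_mul_of_one_le_right (abs_nonneg _) hL1)
    calc (∫ x in Ioo (-δ) δ, f x) = 2 * ((∫ x in (0:ℝ)..a, f x) + ∫ x in a..δ, f x) := by
          rw [hsymm, hsplit]
      _ ≤ 2 * (1/(p+1) + (Real.log δ + L / β)) := by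
          apply mul_le_mul_of_nonneg_left (add_le_add hup0' hup1) (by norm_num)
      _ ≤ 2 * (1/(p+1) + |Real.log δ| + 1/β) * L := by
          have h1 : 1/(p+1) ≤ 1/(p+1) * L :=
            le_mul_of_one_le_right (by positivity) hL1
          have h2 : L / β = (1/β) * L := by ring
          nlinarith [hlogδ, h1]
end

section
/- Let α ∈ (0,1], δ > 0, γ_h(x₁) = h + |x₁|^{1+α}, and φ_h as above on Ω_{h,δ}. Then there is C > 0 independent of h such that for all small h > 0, sup_{x₁ ∈ (−δ,δ)} γ_h(x₁)^{3/2} ( ∫₀^{γ_h(x₁)} |∇w_h(x₁, x₂)|² dx₂ )^{1/2} ≤ C, where w_h = ∇⊥(x₁ φ_h). -/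
open MeasureTheory Set

noncomputable def dd (α : ℝ) : ℝ → ℝ := fun s => (1+α) * |s| ^ (1+α-2) * s
noncomputable def PP (α : ℝ) : ℝ → ℝ := fun s => (1+α) * |s| ^ (1+α)

-- component formulas
lemma wcomp1_aux (G : ℝ → ℝ) (p : ℝ × ℝ) (hGp : G p.1 ≠ 0) :
    -(deriv (fun t : ℝ => p.1 * (t^2 / (G p.1)^2 * (3 - 2*t / G p.1))) p.2)
      = (-6) * ((p.1/(G p.1)^2) * p.2 ^ 1) + 6 * ((p.1/(G p.1)^3) * p.2 ^ 2) := by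
  have A : HasDerivAt (fun t : ℝ => p.1 * (t^2 / (G p.1)^2 * (3 - 2*t / G p.1)))
      (p.1 * ((2*p.2 / (G p.1)^2) * (3 - 2*p.2 / G p.1) + (p.2^2/(G p.1)^2) * (-(2 / G p.1)))) p.2 := by
    have hA1 : HasDerivAt (fun t : ℝ => t^2 / (G p.1)^2) (2*p.2 / (G p.1)^2) p.2 := by
      simpa using (hasDerivAt_pow 2 p.2).div_const ((G p.1)^2)
    have hA2 : HasDerivAt (fun t : ℝ => 3 - 2*t / G p.1) (-(2 / G p.1)) p.2 := by
      have := ((hasDerivAt_id p.2).const_mul 2).div_const (G p.1)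
      simpa using (this.const_sub 3)
    exact (hA1.mul hA2).const_mul p.1
  rw [A.deriv]
  field_simp
  ring

lemma wcomp2_aux (α : ℝ) (hα0 : 0 < α) (G : ℝ → ℝ) (p : ℝ × ℝ) (hGp : G p.1 ≠ 0)
    (hdp : HasDerivAt G (dd α p.1) p.1) :
    deriv (fun s : ℝ => s * (p.2^2 / (G s)^2 * (3 - 2*p.2 / G s))) p.1
      = 3 * ((1/(G p.1)^2) * p.2 ^ 2) + (-2) * ((1/(G p.1)^3) * p.2 ^ 3)
        + (-6) * ((PP α p.1/(G p.1)^3) * p.2 ^ 2) + 6 * ((PP α p.1/(G p.1)^4) * p.2 ^ 3) := by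
  have hPdp : p.1 * dd α p.1 = PP α p.1 := by
    rcases eq_or_ne p.1 0 with h0 | h0
    · simp [h0, dd, PP, Real.zero_rpow (by positivity : (1:ℝ)+α ≠ 0)]
    · have habs : (0:ℝ) < |p.1| := abs_pos.mpr h0
      unfold dd PP
      rw [show p.1 * ((1+α) * |p.1| ^ (1+α-2) * p.1) = (1+α) * (|p.1| ^ (1+α-2) * (p.1*p.1)) by ring,
        show p.1 * p.1 = |p.1| * |p.1| by rw [abs_mul_abs_self],
        show |p.1| ^ (1+α-2) * (|p.1| * |p.1|) = |p.1| ^ (1+α-2) * |p.1| * |p.1| by ring,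
        ← Real.rpow_add_one habs.ne', ← Real.rpow_add_one habs.ne',
        show (1:ℝ)+α-2+1+1 = 1+α by ring]
  have hA1 : HasDerivAt (fun s : ℝ => p.2^2 / (G s)^2)
      ((0 * (G p.1)^2 - p.2^2 * (2 * (G p.1)^1 * dd α p.1)) / ((G p.1)^2)^2) p.1 :=
    (hasDerivAt_const p.1 (p.2^2)).div (hdp.pow 2) (pow_ne_zero 2 hGp)
  have hA2 : HasDerivAt (fun s : ℝ => 3 - 2*p.2 / G s)
      (-((0 * G p.1 - 2*p.2 * dd α p.1) / (G p.1)^2)) p.1 :=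
    ((hasDerivAt_const p.1 (2*p.2)).div hdp hGp).const_sub 3
  have A : HasDerivAt (fun s : ℝ => s * (p.2^2 / (G s)^2 * (3 - 2*p.2 / G s)))
      (1 * (p.2^2 / (G p.1)^2 * (3 - 2*p.2 / G p.1))
        + p.1 * ((0 * (G p.1)^2 - p.2^2 * (2 * (G p.1)^1 * dd α p.1)) / ((G p.1)^2)^2 * (3 - 2*p.2 / G p.1)
          + p.2^2 / (G p.1)^2 * (-((0 * G p.1 - 2*p.2 * dd α p.1) / (G p.1)^2)))) p.1 :=
    (hasDerivAt_id p.1).mul (hA1.mul hA2)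
  rw [A.deriv, ← hPdp]
  field_simp
  ring

-- clean derivatives
lemma dF1_aux (G : ℝ → ℝ) (g d P x₁ : ℝ) (hGd : HasDerivAt G d x₁) (hg : g = G x₁)
    (hg0 : 0 < g) (hPd : x₁ * d = P) :
    HasDerivAt (fun s => s / (G s)^2) (1/g^2 - 2*P/g^3) x₁ := by
  have hGne : G x₁ ≠ 0 := by rw [← hg]; exact hg0.ne'
  have t := (hasDerivAt_id x₁).div (hGd.pow 2) (pow_ne_zero 2 hGne)
  rw [← hg] at t
  refine t.congr_deriv ?_
  rw [← hPd]; simp only [Pi.pow_apply, id, ← hg]; field_simp; ring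

lemma dF2_aux (G : ℝ → ℝ) (g d P x₁ : ℝ) (hGd : HasDerivAt G d x₁) (hg : g = G x₁)
    (hg0 : 0 < g) (hPd : x₁ * d = P) :
    HasDerivAt (fun s => s / (G s)^3) (1/g^3 - 3*P/g^4) x₁ := by
  have hGne : G x₁ ≠ 0 := by rw [← hg]; exact hg0.ne'
  have t := (hasDerivAt_id x₁).div (hGd.pow 3) (pow_ne_zero 3 hGne)
  rw [← hg] at t
  refine t.congr_deriv ?_
  rw [← hPd]; simp only [Pi.pow_apply, id, ← hg]; field_simp; ring

lemma dF3_aux (G : ℝ → ℝ) (g d x₁ : ℝ) (hGd : HasDerivAt G d x₁) (hg : g = G x₁)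
    (hg0 : 0 < g) :
    HasDerivAt (fun s => 1 / (G s)^2) (-2*d/g^3) x₁ := by
  have hGne : G x₁ ≠ 0 := by rw [← hg]; exact hg0.ne'
  have t := (hasDerivAt_const x₁ (1:ℝ)).div (hGd.pow 2) (pow_ne_zero 2 hGne)
  rw [← hg] at t
  refine t.congr_deriv ?_
  simp only [Pi.pow_apply, ← hg]; field_simp; ring

lemma dF4_aux (G : ℝ → ℝ) (g d x₁ : ℝ) (hGd : HasDerivAt G d x₁) (hg : g = G x₁)
    (hg0 : 0 < g) :
    HasDerivAt (fun s => 1 / (G s)^3) (-3*d/g^4) x₁ := by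
  have hGne : G x₁ ≠ 0 := by rw [← hg]; exact hg0.ne'
  have t := (hasDerivAt_const x₁ (1:ℝ)).div (hGd.pow 3) (pow_ne_zero 3 hGne)
  rw [← hg] at t
  refine t.congr_deriv ?_
  simp only [Pi.pow_apply, ← hg]; field_simp; ring

lemma hasDerivAt_PP' {α : ℝ} (hα0 : 0 < α) (s : ℝ) :
    HasDerivAt (PP α) ((1+α) * dd α s) s := by
  have := (hasDerivAt_abs_rpow s (by linarith : (1:ℝ) < 1+α)).const_mul (1+α)
  exact this.congr_deriv (by simp only [dd])

lemma dF5_aux (α : ℝ) (hα0 : 0 < α) (G : ℝ → ℝ) (g d P x₁ : ℝ) (hGd : HasDerivAt G d x₁)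
    (hg : g = G x₁) (hg0 : 0 < g) (hd : d = dd α x₁) (hP : P = PP α x₁) :
    HasDerivAt (fun s => PP α s / (G s)^3) ((1+α)*d/g^3 - 3*P*d/g^4) x₁ := by
  have hGne : G x₁ ≠ 0 := by rw [← hg]; exact hg0.ne'
  have hGd' : HasDerivAt G (dd α x₁) x₁ := hd ▸ hGd
  have t := (hasDerivAt_PP' hα0 x₁).div (hGd'.pow 3) (pow_ne_zero 3 hGne)
  rw [← hg, ← hd, ← hP] at t
  refine t.congr_deriv ?_
  simp only [Pi.pow_apply, ← hg]; field_simp; ring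

lemma dF6_aux (α : ℝ) (hα0 : 0 < α) (G : ℝ → ℝ) (g d P x₁ : ℝ) (hGd : HasDerivAt G d x₁)
    (hg : g = G x₁) (hg0 : 0 < g) (hd : d = dd α x₁) (hP : P = PP α x₁) :
    HasDerivAt (fun s => PP α s / (G s)^4) ((1+α)*d/g^4 - 4*P*d/g^5) x₁ := by
  have hGne : G x₁ ≠ 0 := by rw [← hg]; exact hg0.ne'
  have hGd' : HasDerivAt G (dd α x₁) x₁ := hd ▸ hGd
  have t := (hasDerivAt_PP' hα0 x₁).div (hGd'.pow 4) (pow_ne_zero 4 hGne)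
  rw [← hg, ← hd, ← hP] at t
  refine t.congr_deriv ?_
  simp only [Pi.pow_apply, ← hg]; field_simp; ring

lemma hasFDerivAt_sep {F : ℝ → ℝ} {F' : ℝ} (n : ℕ) (x₁ x₂ : ℝ) (hF : HasDerivAt F F' x₁) :
    HasFDerivAt (fun p : ℝ×ℝ => F p.1 * p.2 ^ n)
      (F x₁ • ((↑n * x₂ ^ (n-1)) • (ContinuousLinearMap.snd ℝ ℝ ℝ))
        + x₂ ^ n • (F' • (ContinuousLinearMap.fst ℝ ℝ ℝ))) (x₁, x₂) := by
  have hA : HasFDerivAt (fun p : ℝ×ℝ => F p.1) (F' • (ContinuousLinearMap.fst ℝ ℝ ℝ)) (x₁, x₂) :=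
    hF.comp_hasFDerivAt _ (hasFDerivAt_fst)
  have hB : HasFDerivAt (fun p : ℝ×ℝ => p.2 ^ n) ((↑n * x₂ ^ (n-1)) • (ContinuousLinearMap.snd ℝ ℝ ℝ)) (x₁, x₂) :=
    (hasDerivAt_pow n x₂).comp_hasFDerivAt _ (hasFDerivAt_snd)
  exact hA.mul hB

lemma comp1_fderiv (F₁ F₂ : ℝ → ℝ) (g P x₁ x₂ e11 e12 : ℝ) (hg0 : 0 < g)
    (hDF₁ : HasDerivAt F₁ (1/g^2 - 2*P/g^3) x₁) (hDF₂ : HasDerivAt F₂ (1/g^3 - 3*P/g^4) x₁)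
    (hv1 : F₁ x₁ = x₁/g^2) (hv2 : F₂ x₁ = x₁/g^3)
    (he11 : e11 = x₂*(-6*g^2 + 12*P*g + 6*x₂*g - 18*P*x₂)/g^4)
    (he12 : e12 = x₁*(-6*g + 12*x₂)/g^3) :
    HasFDerivAt (fun p : ℝ×ℝ => (-6) * (F₁ p.1 * p.2 ^ 1) + 6 * (F₂ p.1 * p.2 ^ 2))
      (e11 • (ContinuousLinearMap.fst ℝ ℝ ℝ) + e12 • (ContinuousLinearMap.snd ℝ ℝ ℝ)) (x₁, x₂) := by
  have t1 := ((hasFDerivAt_sep 1 x₁ x₂ hDF₁).const_mul (-6)).add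
    ((hasFDerivAt_sep 2 x₁ x₂ hDF₂).const_mul 6)
  refine t1.congr_fderiv ?_
  refine ContinuousLinearMap.ext fun u => ?_
  simp only [ContinuousLinearMap.add_apply, ContinuousLinearMap.smul_apply,
    ContinuousLinearMap.coe_fst', ContinuousLinearMap.coe_snd', smul_eq_mul,
    ContinuousLinearMap.coe_smul', Pi.smul_apply, Pi.add_apply]
  rw [hv1, hv2, he11, he12]
  field_simp
  ring

lemma comp2_fderiv (F₃ F₄ F₅ F₆ : ℝ → ℝ) (α g d P x₁ x₂ e21 e22 : ℝ) (hg0 : 0 < g)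
    (hDF₃ : HasDerivAt F₃ (-2*d/g^3) x₁) (hDF₄ : HasDerivAt F₄ (-3*d/g^4) x₁)
    (hDF₅ : HasDerivAt F₅ ((1+α)*d/g^3 - 3*P*d/g^4) x₁)
    (hDF₆ : HasDerivAt F₆ ((1+α)*d/g^4 - 4*P*d/g^5) x₁)
    (hv3 : F₃ x₁ = 1/g^2) (hv4 : F₄ x₁ = 1/g^3) (hv5 : F₅ x₁ = P/g^3) (hv6 : F₆ x₁ = P/g^4)
    (he21 : e21 = d*x₂^2*(-6*g^2 + 6*x₂*g - 6*(1+α)*g^2 + 18*P*g + 6*(1+α)*x₂*g - 24*P*x₂)/g^5)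
    (he22 : e22 = x₂*(6*g^2 - 6*x₂*g - 12*P*g + 18*P*x₂)/g^4) :
    HasFDerivAt (fun p : ℝ×ℝ => 3 * (F₃ p.1 * p.2 ^ 2) + (-2) * (F₄ p.1 * p.2 ^ 3)
        + (-6) * (F₅ p.1 * p.2 ^ 2) + 6 * (F₆ p.1 * p.2 ^ 3))
      (e21 • (ContinuousLinearMap.fst ℝ ℝ ℝ) + e22 • (ContinuousLinearMap.snd ℝ ℝ ℝ)) (x₁, x₂) := by
  have t2 := ((((hasFDerivAt_sep 2 x₁ x₂ hDF₃).const_mul 3).add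
    ((hasFDerivAt_sep 3 x₁ x₂ hDF₄).const_mul (-2))).add
    ((hasFDerivAt_sep 2 x₁ x₂ hDF₅).const_mul (-6))).add
    ((hasFDerivAt_sep 3 x₁ x₂ hDF₆).const_mul 6)
  refine t2.congr_fderiv ?_
  refine ContinuousLinearMap.ext fun u => ?_
  simp only [ContinuousLinearMap.add_apply, ContinuousLinearMap.smul_apply,
    ContinuousLinearMap.coe_fst', ContinuousLinearMap.coe_snd', smul_eq_mul,
    ContinuousLinearMap.coe_smul', Pi.smul_apply, Pi.add_apply]
  rw [hv3, hv4, hv5, hv6, he21, he22]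
  field_simp
  ring

set_option maxHeartbeats 1600000 in
lemma entries_bound (α M K E g d P x₁ x₂ e11 e12 e21 e22 : ℝ)
    (hα0 : 0 < α) (hα1 : α ≤ 1) (hg0 : 0 < g) (hx0 : 0 ≤ x₂) (hxg : x₂ ≤ g)
    (hdM : |d| ≤ 2*M) (hP0 : 0 ≤ P) (hPg : P ≤ 2*g) (hgK : g ≤ K)
    (hxM : |x₁| ≤ M) (hM1 : 1 ≤ M) (hK1 : 1 ≤ K)
    (hE : E = (216 + 240*M)*K + 18*M)
    (he11 : e11 = x₂*(-6*g^2 + 12*P*g + 6*x₂*g - 18*P*x₂)/g^4)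
    (he12 : e12 = x₁*(-6*g + 12*x₂)/g^3)
    (he21 : e21 = d*x₂^2*(-6*g^2 + 6*x₂*g - 6*(1+α)*g^2 + 18*P*g + 6*(1+α)*x₂*g - 24*P*x₂)/g^5)
    (he22 : e22 = x₂*(6*g^2 - 6*x₂*g - 12*P*g + 18*P*x₂)/g^4) :
    (|e11| + |e21|) + (|e12| + |e22|) ≤ E/g^2 := by
  have hb11 : |e11| ≤ 72*K/g^2 := by
    have hR : |(-6*g^2 + 12*P*g + 6*x₂*g - 18*P*x₂)| ≤ 72*g^2 := by
      rw [abs_le]; constructor <;>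
        nlinarith [mul_nonneg hP0 hx0, mul_nonneg hP0 hg0.le, mul_nonneg hx0 hg0.le,
          mul_nonneg (by linarith : (0:ℝ) ≤ 2*g - P) hg0.le,
          mul_nonneg (by linarith : (0:ℝ) ≤ 2*g - P) hx0,
          mul_nonneg (by linarith : (0:ℝ) ≤ g - x₂) hg0.le,
          mul_nonneg (by linarith : (0:ℝ) ≤ g - x₂) hP0]
    calc |e11| = x₂ * |(-6*g^2 + 12*P*g + 6*x₂*g - 18*P*x₂)| / g^4 := by
          rw [he11, abs_div, abs_mul, abs_of_nonneg hx0, abs_of_pos (pow_pos hg0 4)]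
      _ ≤ g*(72*g^2)/g^4 := by gcongr
      _ = 72/g := by field_simp
      _ ≤ 72*K/g^2 := by
          rw [div_le_div_iff₀ hg0 (pow_pos hg0 2)]
          nlinarith [mul_le_mul_of_nonneg_left hgK (by positivity : (0:ℝ) ≤ 72*g)]
  have hb12 : |e12| ≤ 18*M/g^2 := by
    have hR : |(-6*g + 12*x₂)| ≤ 18*g := by
      rw [abs_le]; constructor <;> nlinarith
    calc |e12| = |x₁| * |(-6*g + 12*x₂)| / g^3 := by
          rw [he12, abs_div, abs_mul, abs_of_pos (pow_pos hg0 3)]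
      _ ≤ M*(18*g)/g^3 := by gcongr
      _ = 18*M/g^2 := by field_simp
  have hb21 : |e21| ≤ 240*M*K/g^2 := by
    have hR : |(-6*g^2 + 6*x₂*g - 6*(1+α)*g^2 + 18*P*g + 6*(1+α)*x₂*g - 24*P*x₂)| ≤ 120*g^2 := by
      have hA : |(-6*g^2 + 6*x₂*g + 18*P*g - 24*P*x₂)| ≤ 96*g^2 := by
        rw [abs_le]; constructor <;>
          nlinarith [mul_nonneg hP0 hx0, mul_nonneg hP0 hg0.le, mul_nonneg hx0 hg0.le,
            mul_nonneg (by linarith : (0:ℝ) ≤ 2*g - P) hg0.le,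
            mul_nonneg (by linarith : (0:ℝ) ≤ 2*g - P) hx0,
            mul_nonneg (by linarith : (0:ℝ) ≤ g - x₂) hg0.le,
            mul_nonneg (by linarith : (0:ℝ) ≤ g - x₂) hP0]
      have hB : |(x₂*g - g^2)| ≤ g^2 := by
        rw [abs_le]; constructor <;> nlinarith [mul_nonneg hx0 hg0.le]
      have hsplit : (-6*g^2 + 6*x₂*g - 6*(1+α)*g^2 + 18*P*g + 6*(1+α)*x₂*g - 24*P*x₂)
          = (-6*g^2 + 6*x₂*g + 18*P*g - 24*P*x₂) + (6*(1+α))*(x₂*g - g^2) := by ring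
      calc |(-6*g^2 + 6*x₂*g - 6*(1+α)*g^2 + 18*P*g + 6*(1+α)*x₂*g - 24*P*x₂)|
          ≤ |(-6*g^2 + 6*x₂*g + 18*P*g - 24*P*x₂)| + |(6*(1+α))*(x₂*g - g^2)| := by
            rw [hsplit]; exact abs_add_le _ _
        _ ≤ 96*g^2 + 24*g^2 := by
            refine add_le_add hA ?_
            rw [abs_mul]
            have h6 : |(6*(1+α))| ≤ 12 := by rw [abs_of_pos (by linarith)]; linarith
            nlinarith [abs_nonneg (x₂*g - g^2), abs_nonneg (6*(1+α)), sq_nonneg g]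
        _ = 120*g^2 := by ring
    have hx2sq : x₂^2 ≤ g^2 := by nlinarith
    calc |e21| = |d| * x₂^2 * |(-6*g^2 + 6*x₂*g - 6*(1+α)*g^2 + 18*P*g + 6*(1+α)*x₂*g - 24*P*x₂)| / g^5 := by
          rw [he21, abs_div, abs_mul, abs_mul, abs_of_nonneg (sq_nonneg x₂), abs_of_pos (pow_pos hg0 5)]
      _ ≤ (2*M)*g^2*(120*g^2)/g^5 := by gcongr
      _ = 240*M/g := by field_simp; ring
      _ ≤ 240*M*K/g^2 := by
          rw [div_le_div_iff₀ hg0 (pow_pos hg0 2)]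
          nlinarith [mul_le_mul_of_nonneg_left hgK (by positivity : (0:ℝ) ≤ 240*M*g), hM1]
  have hb22 : |e22| ≤ 72*K/g^2 := by
    have hR : |(6*g^2 - 6*x₂*g - 12*P*g + 18*P*x₂)| ≤ 72*g^2 := by
      rw [abs_le]; constructor <;>
        nlinarith [mul_nonneg hP0 hx0, mul_nonneg hP0 hg0.le, mul_nonneg hx0 hg0.le,
          mul_nonneg (by linarith : (0:ℝ) ≤ 2*g - P) hg0.le,
          mul_nonneg (by linarith : (0:ℝ) ≤ 2*g - P) hx0,
          mul_nonneg (by linarith : (0:ℝ) ≤ g - x₂) hg0.le,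
          mul_nonneg (by linarith : (0:ℝ) ≤ g - x₂) hP0]
    calc |e22| = x₂ * |(6*g^2 - 6*x₂*g - 12*P*g + 18*P*x₂)| / g^4 := by
          rw [he22, abs_div, abs_mul, abs_of_nonneg hx0, abs_of_pos (pow_pos hg0 4)]
      _ ≤ g*(72*g^2)/g^4 := by gcongr
      _ = 72/g := by field_simp
      _ ≤ 72*K/g^2 := by
          rw [div_le_div_iff₀ hg0 (pow_pos hg0 2)]
          nlinarith [mul_le_mul_of_nonneg_left hgK (by positivity : (0:ℝ) ≤ 72*g)]
  calc (|e11| + |e21|) + (|e12| + |e22|)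
      ≤ (72*K/g^2 + 240*M*K/g^2) + (18*M/g^2 + 72*K/g^2) :=
        add_le_add (add_le_add hb11 hb21) (add_le_add hb12 hb22)
    _ = (144*K + 240*M*K + 18*M)/g^2 := by ring
    _ ≤ E/g^2 := by
        gcongr
        rw [hE]; nlinarith

lemma clm_norm_le' (L : ℝ×ℝ →L[ℝ] ℝ×ℝ) : ‖L‖ ≤ ‖L (1,0)‖ + ‖L (0,1)‖ := by
  refine L.opNorm_le_bound (by positivity) fun u => ?_
  have hu : u = u.1 • ((1:ℝ),(0:ℝ)) + u.2 • ((0:ℝ),(1:ℝ)) := by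
    ext <;> simp
  calc ‖L u‖ = ‖u.1 • L (1,0) + u.2 • L (0,1)‖ := by
        conv_lhs => rw [hu]
        rw [map_add, L.map_smul, L.map_smul]
    _ ≤ ‖u.1 • L (1,0)‖ + ‖u.2 • L (0,1)‖ := norm_add_le _ _
    _ ≤ ‖u‖ * ‖L (1,0)‖ + ‖u‖ * ‖L (0,1)‖ := by
        rw [norm_smul, norm_smul]
        gcongr
        · exact norm_fst_le u
        · exact norm_snd_le u
    _ = (‖L (1,0)‖ + ‖L (0,1)‖) * ‖u‖ := by ring

lemma pair_norm_le (a b : ℝ) : ‖((a,b) : ℝ×ℝ)‖ ≤ |a| + |b| := by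
  rw [Prod.norm_def]
  exact max_le (by simp [abs_nonneg b, le_add_of_nonneg_right]) (by simp [abs_nonneg a, le_add_of_nonneg_left])

lemma sd_eq_PP {α : ℝ} (hα0 : 0 < α) (s : ℝ) : s * dd α s = PP α s := by
  rcases eq_or_ne s 0 with rfl | hs
  · simp [dd, PP, Real.zero_rpow (by positivity : (1:ℝ)+α ≠ 0)]
  · have habs : (0:ℝ) < |s| := abs_pos.mpr hs
    unfold dd PP
    rw [show s * ((1+α) * |s| ^ (1+α-2) * s) = (1+α) * (|s| ^ (1+α-2) * (s*s)) by ring,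
      show s * s = |s| * |s| by rw [abs_mul_abs_self],
      show |s| ^ (1+α-2) * (|s| * |s|) = |s| ^ (1+α-2) * |s| * |s| by ring,
      ← Real.rpow_add_one habs.ne', ← Real.rpow_add_one habs.ne',
      show (1:ℝ)+α-2+1+1 = 1+α by ring]

lemma abs_dd_le {α : ℝ} (hα0 : 0 < α) (s : ℝ) : |dd α s| ≤ (1+α) * |s| ^ α := by
  rcases eq_or_ne s 0 with rfl | hs
  · simp [dd, Real.zero_rpow (ne_of_gt hα0)]
  · have habs : (0:ℝ) < |s| := abs_pos.mpr hs
    unfold dd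
    rw [abs_mul, abs_mul, abs_of_nonneg (by positivity : (0:ℝ) ≤ 1+α),
      abs_of_nonneg (Real.rpow_nonneg (abs_nonneg s) _),
      mul_assoc, ← Real.rpow_add_one habs.ne' (1+α-2),
      show (1:ℝ)+α-2+1 = α by ring]

lemma PP_nonneg' {α : ℝ} (hα0 : 0 < α) (s : ℝ) : 0 ≤ PP α s := by
  unfold PP; positivity

lemma PP_le' {α : ℝ} (hα0 : 0 < α) (hα1 : α ≤ 1) (h s : ℝ) (hh : 0 ≤ h) :
    PP α s ≤ 2 * (h + |s| ^ (1+α)) := by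
  unfold PP
  have h1 : (0:ℝ) ≤ |s| ^ (1+α) := Real.rpow_nonneg (abs_nonneg s) _
  nlinarith

set_option maxHeartbeats 1000000 in
theorem gradient_test_function_fiberwise_bound (α δ : ℝ) (hα : α ∈ Ioc (0:ℝ) 1) (hδ : 0 < δ)
    (γ : ℝ → ℝ → ℝ) (hγ : ∀ h x₁, γ h x₁ = h + |x₁| ^ (1 + α))
    (φ : ℝ → ℝ × ℝ → ℝ)
    (hφ : ∀ h x, φ h x = x.2 ^ 2 / (γ h x.1) ^ 2 * (3 - 2 * x.2 / γ h x.1))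
    (w : ℝ → ℝ × ℝ → ℝ × ℝ)
    (hw : ∀ h x, w h x =
      (-(deriv (fun t : ℝ => x.1 * φ h (x.1, t)) x.2),
        deriv (fun s : ℝ => s * φ h (s, x.2)) x.1)) :
    ∃ C : ℝ, 0 < C ∧ ∃ h₀ : ℝ, 0 < h₀ ∧
      ∀ h ∈ Ioo (0:ℝ) h₀, ∀ x₁ ∈ Ioo (-δ) δ,
        (γ h x₁) ^ ((3:ℝ)/2) *
          (∫ x₂ in Ioo 0 (γ h x₁), ‖fderiv ℝ (w h) (x₁, x₂)‖ ^ 2) ^ ((1:ℝ)/2) ≤ C := by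
  obtain ⟨hα0, hα1⟩ := hα
  obtain ⟨M, hM⟩ : ∃ x : ℝ, x = max δ 1 := ⟨_, rfl⟩
  have hM1 : 1 ≤ M := by rw [hM]; exact le_max_right δ 1
  have hδM : δ ≤ M := by rw [hM]; exact le_max_left δ 1
  obtain ⟨K, hK⟩ : ∃ x : ℝ, x = 1 + M^2 := ⟨_, rfl⟩
  have hK1 : 1 ≤ K := by rw [hK]; nlinarith
  obtain ⟨E, hE⟩ : ∃ x : ℝ, x = (216 + 240*M)*K + 18*M := ⟨_, rfl⟩
  have hE0 : 0 < E := by rw [hE]; nlinarith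
  refine ⟨E, hE0, 1, one_pos, ?_⟩
  rintro h ⟨hh0, hh1⟩ x₁ ⟨hx₁l, hx₁r⟩
  obtain ⟨G, hG⟩ : ∃ x : ℝ → ℝ, x = fun s => h + |s| ^ (1+α) := ⟨_, rfl⟩
  have hγG : γ h = G := by rw [hG]; exact funext (hγ h)
  have hGpos : ∀ s, 0 < G s := fun s => by
    have : (0:ℝ) ≤ |s| ^ (1+α) := Real.rpow_nonneg (abs_nonneg s) _
    rw [hG]; dsimp only; linarith
  obtain ⟨g, hg⟩ : ∃ x : ℝ, x = G x₁ := ⟨_, rfl⟩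
  have hg0 : 0 < g := by rw [hg]; exact hGpos x₁
  obtain ⟨d, hd⟩ : ∃ x : ℝ, x = dd α x₁ := ⟨_, rfl⟩
  obtain ⟨P, hP⟩ : ∃ x : ℝ, x = PP α x₁ := ⟨_, rfl⟩
  have hPd : x₁ * d = P := by rw [hd, hP]; exact sd_eq_PP hα0 x₁
  have hxM : |x₁| ≤ M := by
    rw [abs_le]; constructor <;> [linarith; linarith]
  have hxαM : |x₁| ^ α ≤ M := by
    rcases le_or_gt (|x₁|) 1 with hc | hc
    · exact le_trans (Real.rpow_le_one (abs_nonneg _) hc (le_of_lt hα0)) hM1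
    · calc |x₁| ^ α ≤ |x₁| ^ (1:ℝ) :=
            Real.rpow_le_rpow_of_exponent_le (le_of_lt hc) hα1
        _ = |x₁| := Real.rpow_one _
        _ ≤ M := hxM
  have hdM : |d| ≤ 2*M := by
    rw [hd]
    calc |dd α x₁| ≤ (1+α) * |x₁| ^ α := abs_dd_le hα0 x₁
      _ ≤ 2 * M := by nlinarith [Real.rpow_nonneg (abs_nonneg x₁) α]
  have hP0 : 0 ≤ P := by rw [hP]; exact PP_nonneg' hα0 x₁
  have hPg : P ≤ 2*g := by
    rw [hP, hg, hG]
    exact PP_le' hα0 hα1 h x₁ (le_of_lt hh0)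
  have hgK : g ≤ K := by
    have h1 : |x₁| ^ (1+α) ≤ M ^ (1+α) := Real.rpow_le_rpow (abs_nonneg _) hxM (by linarith)
    have h2 : M ^ (1+α) ≤ M ^ (2:ℝ) := Real.rpow_le_rpow_of_exponent_le hM1 (by linarith)
    have h3 : M ^ (2:ℝ) = M^2 := by
      rw [show (2:ℝ) = ((2:ℕ):ℝ) by norm_num, Real.rpow_natCast]
    have h5 : |x₁| ^ (1+α) ≤ M^2 := le_trans h1 (le_trans h2 h3.le)
    have h4 : g = h + |x₁| ^ (1+α) := by rw [hg, hG]
    rw [h4, hK]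
    clear h1 h2 h3
    linarith
  have hGd : HasDerivAt G d x₁ := by
    rw [hG, hd]
    exact (hasDerivAt_abs_rpow x₁ (by linarith : (1:ℝ) < 1+α)).const_add h
  obtain ⟨F₁, hF₁⟩ : ∃ x : ℝ → ℝ, x = fun s => s / (G s)^2 := ⟨_, rfl⟩
  obtain ⟨F₂, hF₂⟩ : ∃ x : ℝ → ℝ, x = fun s => s / (G s)^3 := ⟨_, rfl⟩
  obtain ⟨F₃, hF₃⟩ : ∃ x : ℝ → ℝ, x = fun s => 1 / (G s)^2 := ⟨_, rfl⟩
  obtain ⟨F₄, hF₄⟩ : ∃ x : ℝ → ℝ, x = fun s => 1 / (G s)^3 := ⟨_, rfl⟩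
  obtain ⟨F₅, hF₅⟩ : ∃ x : ℝ → ℝ, x = fun s => PP α s / (G s)^3 := ⟨_, rfl⟩
  obtain ⟨F₆, hF₆⟩ : ∃ x : ℝ → ℝ, x = fun s => PP α s / (G s)^4 := ⟨_, rfl⟩
  obtain ⟨W, hW⟩ : ∃ x : ℝ × ℝ → ℝ × ℝ, x = fun p =>
      ((-6) * (F₁ p.1 * p.2 ^ 1) + 6 * (F₂ p.1 * p.2 ^ 2),
       3 * (F₃ p.1 * p.2 ^ 2) + (-2) * (F₄ p.1 * p.2 ^ 3)
         + (-6) * (F₅ p.1 * p.2 ^ 2) + 6 * (F₆ p.1 * p.2 ^ 3)) := ⟨_, rfl⟩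
  have hwW : w h = W := by
    funext p
    rw [hw]
    have hGp := (hGpos p.1).ne'
    have hdp : HasDerivAt G (dd α p.1) p.1 := by
      rw [hG]
      exact (hasDerivAt_abs_rpow p.1 (by linarith : (1:ℝ) < 1+α)).const_add h
    have e1 : (fun t : ℝ => p.1 * φ h (p.1, t))
        = fun t : ℝ => p.1 * (t^2 / (G p.1)^2 * (3 - 2*t / G p.1)) := by
      funext t; rw [hφ, hγG]
    have e2 : (fun s : ℝ => s * φ h (s, p.2))
        = fun s : ℝ => s * (p.2^2 / (G s)^2 * (3 - 2*p.2 / G s)) := by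
      funext s; rw [hφ, hγG]
    rw [e1, e2]
    simp only [hW, Prod.mk.injEq]
    constructor
    · rw [wcomp1_aux G p hGp]
      simp only [hF₁, hF₂]
    · rw [wcomp2_aux α hα0 G p hGp hdp]
      simp only [hF₃, hF₄, hF₅, hF₆]
  -- key pointwise bound
  have key : ∀ x₂ : ℝ, x₂ ∈ Ioo 0 g →
      ‖fderiv ℝ (w h) (x₁, x₂)‖^2 ≤ (E/g^2)^2 := by
    intro x₂ hx₂
    obtain ⟨hx0, hxg⟩ := hx₂
    have hx0 : 0 ≤ x₂ := le_of_lt hx0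
    have hxg : x₂ ≤ g := le_of_lt hxg
    obtain ⟨e11, he11⟩ : ∃ x : ℝ, x = x₂*(-6*g^2 + 12*P*g + 6*x₂*g - 18*P*x₂)/g^4 := ⟨_, rfl⟩
    obtain ⟨e12, he12⟩ : ∃ x : ℝ, x = x₁*(-6*g + 12*x₂)/g^3 := ⟨_, rfl⟩
    obtain ⟨e21, he21⟩ : ∃ x : ℝ, x = d*x₂^2*(-6*g^2 + 6*x₂*g - 6*(1+α)*g^2 + 18*P*g + 6*(1+α)*x₂*g - 24*P*x₂)/g^5 := ⟨_, rfl⟩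
    obtain ⟨e22, he22⟩ : ∃ x : ℝ, x = x₂*(6*g^2 - 6*x₂*g - 12*P*g + 18*P*x₂)/g^4 := ⟨_, rfl⟩
    have hDF₁ : HasDerivAt F₁ (1/g^2 - 2*P/g^3) x₁ := by
      rw [hF₁]; exact dF1_aux G g d P x₁ hGd hg hg0 hPd
    have hDF₂ : HasDerivAt F₂ (1/g^3 - 3*P/g^4) x₁ := by
      rw [hF₂]; exact dF2_aux G g d P x₁ hGd hg hg0 hPd
    have hDF₃ : HasDerivAt F₃ (-2*d/g^3) x₁ := by
      rw [hF₃]; exact dF3_aux G g d x₁ hGd hg hg0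
    have hDF₄ : HasDerivAt F₄ (-3*d/g^4) x₁ := by
      rw [hF₄]; exact dF4_aux G g d x₁ hGd hg hg0
    have hDF₅ : HasDerivAt F₅ ((1+α)*d/g^3 - 3*P*d/g^4) x₁ := by
      rw [hF₅]; exact dF5_aux α hα0 G g d P x₁ hGd hg hg0 hd hP
    have hDF₆ : HasDerivAt F₆ ((1+α)*d/g^4 - 4*P*d/g^5) x₁ := by
      rw [hF₆]; exact dF6_aux α hα0 G g d P x₁ hGd hg hg0 hd hP
    have hv1 : F₁ x₁ = x₁/g^2 := by rw [hF₁, hg]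
    have hv2 : F₂ x₁ = x₁/g^3 := by rw [hF₂, hg]
    have hv3 : F₃ x₁ = 1/g^2 := by rw [hF₃, hg]
    have hv4 : F₄ x₁ = 1/g^3 := by rw [hF₄, hg]
    have hv5 : F₅ x₁ = P/g^3 := by rw [hF₅, hg, hP]
    have hv6 : F₆ x₁ = P/g^4 := by rw [hF₆, hg, hP]
    have hW1 := comp1_fderiv F₁ F₂ g P x₁ x₂ e11 e12 hg0 hDF₁ hDF₂ hv1 hv2 he11 he12
    have hW2 := comp2_fderiv F₃ F₄ F₅ F₆ α g d P x₁ x₂ e21 e22 hg0 hDF₃ hDF₄ hDF₅ hDF₆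
      hv3 hv4 hv5 hv6 he21 he22
    have hLW : HasFDerivAt W
        ((e11 • (ContinuousLinearMap.fst ℝ ℝ ℝ) + e12 • (ContinuousLinearMap.snd ℝ ℝ ℝ)).prod
         (e21 • (ContinuousLinearMap.fst ℝ ℝ ℝ) + e22 • (ContinuousLinearMap.snd ℝ ℝ ℝ))) (x₁, x₂) := by
      rw [hW]; exact hW1.prodMk hW2
    have hfd : fderiv ℝ (w h) (x₁, x₂)
        = ((e11 • (ContinuousLinearMap.fst ℝ ℝ ℝ) + e12 • (ContinuousLinearMap.snd ℝ ℝ ℝ)).prod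
           (e21 • (ContinuousLinearMap.fst ℝ ℝ ℝ) + e22 • (ContinuousLinearMap.snd ℝ ℝ ℝ))) := by
      rw [hwW]; exact hLW.fderiv
    have h10 : ((e11 • (ContinuousLinearMap.fst ℝ ℝ ℝ) + e12 • (ContinuousLinearMap.snd ℝ ℝ ℝ)).prod
        (e21 • (ContinuousLinearMap.fst ℝ ℝ ℝ) + e22 • (ContinuousLinearMap.snd ℝ ℝ ℝ))) (1,0) = (e11, e21) := by
      simp
    have h01 : ((e11 • (ContinuousLinearMap.fst ℝ ℝ ℝ) + e12 • (ContinuousLinearMap.snd ℝ ℝ ℝ)).prod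
        (e21 • (ContinuousLinearMap.fst ℝ ℝ ℝ) + e22 • (ContinuousLinearMap.snd ℝ ℝ ℝ))) (0,1) = (e12, e22) := by
      simp
    have hnorm : ‖fderiv ℝ (w h) (x₁, x₂)‖ ≤ E/g^2 := by
      rw [hfd]
      refine le_trans (clm_norm_le' _) ?_
      rw [h10, h01]
      refine le_trans (add_le_add (pair_norm_le _ _) (pair_norm_le _ _)) ?_
      exact entries_bound α M K E g d P x₁ x₂ e11 e12 e21 e22 hα0 hα1 hg0 hx0 hxg
        hdM hP0 hPg hgK hxM hM1 hK1 hE he11 he12 he21 he22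
    exact pow_le_pow_left₀ (norm_nonneg _) hnorm 2
  -- integral bound
  have hI0 : 0 ≤ ∫ x₂ in Ioo 0 g, ‖fderiv ℝ (w h) (x₁, x₂)‖^2 :=
    integral_nonneg fun x => by positivity
  have hint : (∫ x₂ in Ioo 0 g, ‖fderiv ℝ (w h) (x₁, x₂)‖^2) ≤ (E/g^2)^2 * g := by
    have h1 : (∫ x₂ in Ioo 0 g, ‖fderiv ℝ (w h) (x₁, x₂)‖^2)
        ≤ ∫ _x₂ in Ioo 0 g, (E/g^2)^2 := by
      apply integral_mono_of_nonneg
      · filter_upwards with x; positivity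
      · exact integrableOn_const (by rw [Real.volume_Ioo]; exact ENNReal.ofReal_lt_top.ne)
      · exact (ae_restrict_iff' measurableSet_Ioo).mpr
          (Filter.Eventually.of_forall fun x hx => key x hx)
    rw [setIntegral_const, Real.volume_real_Ioo, max_eq_left (by linarith), smul_eq_mul] at h1
    calc (∫ x₂ in Ioo 0 g, ‖fderiv ℝ (w h) (x₁, x₂)‖^2) ≤ (g - 0) * (E/g^2)^2 := h1
      _ = (E/g^2)^2 * g := by ring
  -- conclusion
  obtain ⟨B, hB⟩ : ∃ x : ℝ, x = E * g ^ (-(3:ℝ)/2) := ⟨_, rfl⟩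
  have hB0 : 0 ≤ B := by
    rw [hB]; positivity
  have hgneg3 : g ^ (-(3:ℝ)) = (g^3)⁻¹ := by
    rw [Real.rpow_neg hg0.le, show (3:ℝ) = ((3:ℕ):ℝ) by norm_num, Real.rpow_natCast]
  have hBsq : B^2 = (E/g^2)^2 * g := by
    rw [hB, mul_pow, ← Real.rpow_natCast (g ^ (-(3:ℝ)/2)) 2, ← Real.rpow_mul hg0.le,
      show (-(3:ℝ)/2) * ((2:ℕ):ℝ) = -(3:ℝ) by norm_num, hgneg3]
    field_simp
  have hBr : ((E/g^2)^2 * g) ^ ((1:ℝ)/2) = B := by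
    rw [← hBsq, ← Real.rpow_natCast B 2, ← Real.rpow_mul hB0,
      show ((2:ℕ):ℝ) * ((1:ℝ)/2) = 1 by norm_num, Real.rpow_one]
  have hgB : g ^ ((3:ℝ)/2) * B = E := by
    rw [hB, show g ^ ((3:ℝ)/2) * (E * g ^ (-(3:ℝ)/2)) = E * (g ^ ((3:ℝ)/2) * g ^ (-(3:ℝ)/2)) by ring,
      ← Real.rpow_add hg0, show (3:ℝ)/2 + -(3:ℝ)/2 = 0 by norm_num, Real.rpow_zero, mul_one]
  have hγg : γ h x₁ = g := by rw [hγG, hg]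
  rw [hγg]
  calc g ^ ((3:ℝ)/2) * (∫ x₂ in Ioo 0 g, ‖fderiv ℝ (w h) (x₁, x₂)‖^2) ^ ((1:ℝ)/2)
      ≤ g ^ ((3:ℝ)/2) * (((E/g^2)^2 * g) ^ ((1:ℝ)/2)) :=
        mul_le_mul_of_nonneg_left (Real.rpow_le_rpow hI0 hint (by norm_num))
          (Real.rpow_nonneg hg0.le _)
    _ = g ^ ((3:ℝ)/2) * B := by rw [hBr]
    _ = E := hgB
end
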